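/- Let H = H(2^a, 2^b; 2^{a−1}, 2^e−1) with max{1, a−b} < e < min{a, b}, and write r = 2^e−1, y₁ = 2^{b−1}y for an integer y. Then the automorphism conditions (2^b·x₂ terms vanish and r^{y₂−1} − 1 ≡ 2^{a−1}y (mod 2^a)) hold if and only if: either y is even and y₂ ≡ 1 (mod 2^{a−e}), or e ≤ a−2, y is odd and v₂(y₂ − 1) = a − e − 1. -/

import Mathlib

lemma emult_pow_mul_odd (k : ℕ) (u : ℤ) (hu : Odd u) :
    emultiplicity (2:ℤ) (2^k * u) = (k : ℕ∞) := by
  rw [emultiplicity_eq_coe]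
  constructor
  · exact Dvd.intro u rfl
  · intro h
    rw [pow_succ, mul_dvd_mul_iff_left (by positivity : (2:ℤ)^k ≠ 0)] at h
    exact (Int.not_even_iff_odd.mpr hu) (even_iff_two_dvd.mpr h)

lemma dvd_iff_emult (a : ℕ) (ha : 1 ≤ a) (x : ℤ) :
    (2:ℤ)^a ∣ x - 2^(a-1) ↔ emultiplicity (2:ℤ) x = ((a-1 : ℕ) : ℕ∞) := by
  have h2a : (2:ℤ)^a = 2^(a-1) * 2 := by rw [← pow_succ]; congr 1; omega
  constructor
  · rintro ⟨t, ht⟩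
    have hx : x = 2^(a-1) * (1 + 2*t) := by
      rw [h2a] at ht; linarith [ht]
    rw [hx]
    exact emult_pow_mul_odd _ _ ⟨t, by ring⟩
  · intro h
    obtain ⟨⟨u, hu⟩, h2⟩ := emultiplicity_eq_coe.mp h
    have ha' : a - 1 + 1 = a := by omega
    rw [ha'] at h2
    have hou : Odd u := by
      rcases Int.even_or_odd u with ⟨w, hw⟩ | ho
      · exact absurd ⟨w, by rw [hu, hw, h2a]; ring⟩ h2
      · exact ho
    obtain ⟨w, hw⟩ := hou
    exact ⟨w, by rw [hu, hw, h2a]; ring⟩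

lemma enat_add_le (e a : ℕ) (hea : e ≤ a) (v : ℕ∞) :
    (a : ℕ∞) ≤ (e : ℕ∞) + v ↔ ((a - e : ℕ) : ℕ∞) ≤ v := by
  induction v using ENat.recTopCoe with
  | top => simp
  | coe m =>
    rw [← Nat.cast_add, Nat.cast_le, Nat.cast_le]
    omega

lemma enat_add_eq (e a : ℕ) (hea : e < a) (v : ℕ∞) (hv1 : 1 ≤ v) :
    (e : ℕ∞) + v = ((a-1 : ℕ) : ℕ∞) ↔ (e + 2 ≤ a ∧ v = ((a-e-1 : ℕ) : ℕ∞)) := by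
  induction v using ENat.recTopCoe with
  | top =>
    simp only [add_top]
    constructor
    · intro h; exact absurd h.symm (ENat.coe_ne_top _)
    · rintro ⟨-, h⟩; exact absurd h.symm (ENat.coe_ne_top _)
  | coe m =>
    rw [← Nat.cast_add, Nat.cast_inj, Nat.cast_inj]
    rw [Nat.one_le_cast] at hv1
    omega

theorem typeII_conditions_iff (a b e : ℕ) (he1 : 1 < e) (habe : a - b < e) (hea : e < a)
    (heb : e < b) (y : ℤ) (y₂ : ℕ) (hy₂ : Odd y₂) :
    (((2 : ℤ) ^ e - 1) ^ (y₂ - 1) - 1 ≡ 2 ^ (a - 1) * y [ZMOD 2 ^ a]) ↔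
    ((Even y ∧ (y₂ : ℤ) ≡ 1 [ZMOD 2 ^ (a - e)]) ∨
      (e ≤ a - 2 ∧ Odd y ∧ emultiplicity 2 ((y₂ : ℤ) - 1) = ((a - e - 1 : ℕ) : ℕ∞))) := by
  obtain ⟨c, hc⟩ := hy₂
  set n : ℕ := y₂ - 1 with hn
  have hcast : ((y₂:ℤ) - 1) = (n:ℤ) := by push_cast [hn]; omega
  set v : ℕ∞ := emultiplicity (2:ℤ) ((y₂:ℤ) - 1) with hvdef
  have h2a : (2:ℤ)^a = 2^(a-1) * 2 := by rw [← pow_succ]; congr 1; omega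
  have hv1 : 1 ≤ v := by
    rw [hvdef, ← pow_one (2:ℤ)]
    apply le_emultiplicity_of_pow_dvd
    rw [pow_one, hcast]
    exact ⟨c, by push_cast [hn]; omega⟩
  have key : emultiplicity (2:ℤ) (((2:ℤ)^e - 1)^n - 1) = (e : ℕ∞) + v := by
    have hEn : Even n := ⟨c, by omega⟩
    have hodd1 : Odd ((2:ℤ)^e - 1) := by
      have hev : Even ((2:ℤ)^e) := by
        obtain ⟨j, hj⟩ : ∃ j, e = j + 1 := ⟨e - 1, by omega⟩
        exact ⟨2^j, by rw [hj]; ring⟩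
      exact hev.sub_odd odd_one
    have h2e : (2:ℤ)^e = 2^(e-1)*2 := by rw [← pow_succ]; congr 1; omega
    have h := Int.two_pow_sub_pow (x := (2:ℤ)^e - 1) (y := 1) (n := n)
      ⟨2^(e-1) - 1, by rw [h2e]; ring⟩
      (by rw [← even_iff_two_dvd, Int.not_even_iff_odd]; exact hodd1) hEn
    rw [one_pow] at h
    have e1 : emultiplicity (2:ℤ) ((2:ℤ)^e - 1 + 1) = (e : ℕ∞) := by
      rw [sub_add_cancel, show ((2:ℤ)^e) = 2^e * 1 by ring]
      exact emult_pow_mul_odd e 1 odd_one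
    have e2 : emultiplicity (2:ℤ) ((2:ℤ)^e - 1 - 1) = ((1:ℕ) : ℕ∞) := by
      have hfac : (2:ℤ)^e - 1 - 1 = 2^1 * (2^(e-1) - 1) := by rw [h2e]; ring
      rw [hfac]
      apply emult_pow_mul_odd
      have hev : Even ((2:ℤ)^(e-1)) := by
        obtain ⟨j, hj⟩ : ∃ j, e - 1 = j + 1 := ⟨e - 2, by omega⟩
        exact ⟨2^j, by rw [hj]; ring⟩
      exact hev.sub_odd odd_one
    rw [e1, e2, ← hcast, ← hvdef] at h
    have h' : emultiplicity (2:ℤ) (((2:ℤ)^e - 1)^n - 1) + 1 = ((e:ℕ∞) + v) + 1 := by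
      rw [h]
      push_cast
      rw [add_right_comm]
    exact WithTop.add_right_cancel WithTop.one_ne_top h'
  rcases Int.even_or_odd y with hy | hy
  · -- y even
    obtain ⟨k, hk⟩ := hy
    have hnotodd : ¬ Odd y := Int.not_odd_iff_even.mpr ⟨k, hk⟩
    have hrhs : (2:ℤ)^(a-1) * y = 2^a * k := by rw [hk, h2a]; ring
    rw [Int.modEq_iff_dvd, hrhs, dvd_sub_right (dvd_mul_right _ k),
      pow_dvd_iff_le_emultiplicity, key, enat_add_le e a hea.le]
    have hcong : ((y₂:ℤ) ≡ 1 [ZMOD 2^(a-e)]) ↔ ((a-e:ℕ):ℕ∞) ≤ v := by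
      rw [Int.modEq_iff_dvd, dvd_sub_comm, hvdef, pow_dvd_iff_le_emultiplicity]
    constructor
    · intro h
      exact Or.inl ⟨⟨k, hk⟩, hcong.mpr h⟩
    · rintro (⟨-, h⟩ | ⟨-, h, -⟩)
      · exact hcong.mp h
      · exact absurd h hnotodd
  · -- y odd
    obtain ⟨k, hk⟩ := hy
    have hnoteven : ¬ Even y := Int.not_even_iff_odd.mpr ⟨k, hk⟩
    have hrhs : (2:ℤ)^(a-1) * y = 2^a * k + 2^(a-1) := by rw [hk, h2a]; ring
    have hsplit : (2:ℤ)^a * k + 2^(a-1) - (((2:ℤ)^e - 1)^n - 1)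
        = 2^a * k - ((((2:ℤ)^e - 1)^n - 1) - 2^(a-1)) := by ring
    rw [Int.modEq_iff_dvd, hrhs, hsplit, dvd_sub_right (dvd_mul_right _ k),
      dvd_iff_emult a (by omega), key, enat_add_eq e a hea v hv1]
    constructor
    · rintro ⟨h1, h2⟩
      exact Or.inr ⟨by omega, ⟨k, hk⟩, h2⟩
    · rintro (⟨h, -⟩ | ⟨h1, -, h2⟩)
      · exact absurd h hnoteven
      · exact ⟨by omega, h2⟩
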